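/- For every cycle C_g of length g ≥ 5, there exists a permutation σ of the vertex set of C_g such that for every edge xy of C_g, the pair σ(x)σ(y) is not an edge of C_g. -/
import Mathlib

/-- Key arithmetic fact: the value of a `Fin g` subtraction being 1. -/
private lemma cyc_key (g a b : ℕ) (hg : 2 ≤ g) (ha : a < g) (hb : b < g) :
    (g - b + a) % g = 1 ↔ (a = b + 1 ∨ (b + 1 = g ∧ a = 0)) := by
  rcases Nat.lt_or_ge a b with h | h
  · rw [Nat.mod_eq_of_lt (by omega)]; omega
  · rw [show g - b + a = g + (a - b) by omega, Nat.add_mod_left,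
      Nat.mod_eq_of_lt (by omega)]
    omega

/-- If the images of the endpoints of an edge differ by `d` (mod `g`) with
`2 ≤ d ≤ g - 2`, then the images are non-adjacent in the cycle. -/
private lemma cyc_step (g p q d : ℕ) (hp : p < g) (hq : q < g)
    (hd2 : 2 ≤ d) (hdg : d + 2 ≤ g) (h : q % g = (p + d) % g) :
    ¬((p = q + 1 ∨ (q + 1 = g ∧ p = 0)) ∨ (q = p + 1 ∨ (p + 1 = g ∧ q = 0))) := by
  have hq' : q = (p + d) % g := by rw [← h, Nat.mod_eq_of_lt hq]
  rcases Nat.lt_or_ge (p + d) g with h2 | h2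
  · rw [Nat.mod_eq_of_lt h2] at hq'; omega
  · rw [show p + d = g + (p + d - g) by omega, Nat.add_mod_left,
      Nat.mod_eq_of_lt (by omega)] at hq'
    omega

/-- The doubling map, for odd `g`. -/
private def onat (g v : ℕ) : ℕ := 2 * v % g

private lemma onat_lt (g v : ℕ) (hg : 0 < g) : onat g v < g := Nat.mod_lt _ hg

private lemma onat_inj (g : ℕ) (hodd : g % 2 = 1) {a b : ℕ} (ha : a < g) (hb : b < g)
    (h : onat g a = onat g b) : a = b := by
  have hco : Nat.gcd g 2 = 1 :=
    Nat.coprime_two_right.mpr (Nat.odd_iff.mpr hodd)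
  have : a ≡ b [MOD g] := Nat.ModEq.cancel_left_of_coprime hco h
  have h2 : a % g = b % g := this
  rwa [Nat.mod_eq_of_lt ha, Nat.mod_eq_of_lt hb] at h2

private lemma onat_edge (g a b : ℕ) (hedge : b = a + 1 ∨ (a + 1 = g ∧ b = 0)) :
    onat g b % g = (onat g a + 2) % g := by
  unfold onat
  rw [Nat.mod_mod_of_dvd _ dvd_rfl,
    (Nat.ModEq.add_right 2 (Nat.mod_modEq (2 * a) g) : (2 * a % g + 2) % g = _)]
  rcases hedge with rfl | ⟨h1, rfl⟩
  · rw [show 2 * (a + 1) = 2 * a + 2 by ring]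
  · rw [show 2 * a + 2 = g + g by omega, Nat.add_mod_left, Nat.mod_self,
      Nat.mul_zero, Nat.zero_mod]

/-- The interleaving map, for even `g = 2 * m`. -/
private def enat (g m v : ℕ) : ℕ :=
  if v < m then 2 * v else if v = m then 1 else 2 * (g - v) + 1

private lemma enat_lt (g m v : ℕ) (hm : g = 2 * m) (h3 : 3 ≤ m) (hv : v < g) :
    enat g m v < g := by
  unfold enat; split_ifs <;> omega

private lemma enat_inj (g m : ℕ) (hm : g = 2 * m) (h3 : 3 ≤ m) {a b : ℕ}
    (ha : a < g) (hb : b < g) (h : enat g m a = enat g m b) : a = b := by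
  unfold enat at h; split_ifs at h <;> omega

private lemma enat_edge (g m a b : ℕ) (hm : g = 2 * m) (h3 : 3 ≤ m)
    (ha : a < g) (hb : b < g) (hedge : b = a + 1 ∨ (a + 1 = g ∧ b = 0)) :
    ∃ d, 2 ≤ d ∧ d + 2 ≤ g ∧ enat g m b % g = (enat g m a + d) % g := by
  unfold enat
  rcases hedge with rfl | ⟨h1, rfl⟩
  · by_cases h0 : a + 1 < m
    · refine ⟨2, by omega, by omega, ?_⟩
      rw [if_pos h0, if_pos (by omega), show 2 * (a + 1) = 2 * a + 2 by ring]
    · by_cases h1 : a + 1 = m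
      · refine ⟨3, by omega, by omega, ?_⟩
        rw [if_neg h0, if_pos h1, if_pos (by omega),
          show 2 * a + 3 = g + 1 by omega, Nat.add_mod_left]
      · by_cases h2 : a = m
        · refine ⟨g - 2, by omega, by omega, ?_⟩
          rw [if_neg h0, if_neg (by omega), if_neg (by omega), if_pos h2]
          congr 1
          omega
        · refine ⟨g - 2, by omega, by omega, ?_⟩
          rw [if_neg h0, if_neg (by omega), if_neg (by omega), if_neg h2,
            show 2 * (g - a) + 1 + (g - 2) = 2 * (g - (a + 1)) + 1 + g by omega,
            Nat.add_mod_right]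
  · refine ⟨g - 3, by omega, by omega, ?_⟩
    rw [if_pos (by omega), if_neg (by omega), if_neg (by omega),
      show 2 * (g - a) + 1 + (g - 3) = g by omega, Nat.mul_zero, Nat.zero_mod,
      Nat.mod_self]

theorem cycle_has_special_permutation (g : ℕ) (hg : 5 ≤ g) :
    ∃ σ : Equiv.Perm (Fin g), ∀ x y : Fin g,
      (SimpleGraph.cycleGraph g).Adj x y →
        ¬ (SimpleGraph.cycleGraph g).Adj (σ x) (σ y) := by
  have hg0 : 0 < g := by omega
  have adjIff : ∀ u v : Fin g, (SimpleGraph.cycleGraph g).Adj u v ↔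
      ((u.val = v.val + 1 ∨ (v.val + 1 = g ∧ u.val = 0)) ∨
       (v.val = u.val + 1 ∨ (u.val + 1 = g ∧ v.val = 0))) := by
    intro u v
    rw [SimpleGraph.cycleGraph_adj']
    exact Iff.or (cyc_key g u.val v.val (by omega) u.isLt v.isLt)
      (cyc_key g v.val u.val (by omega) v.isLt u.isLt)
  rcases Nat.even_or_odd g with ⟨m, hm⟩ | hodd
  · -- even case
    have hm' : g = 2 * m := by omega
    have h3 : 3 ≤ m := by omega
    set f : Fin g → Fin g :=
      fun x => ⟨enat g m x.val, enat_lt g m x.val hm' h3 x.isLt⟩ with hf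
    have hfb : Function.Bijective f :=
      Finite.injective_iff_bijective.mp (fun x y h =>
        Fin.ext (enat_inj g m hm' h3 x.isLt y.isLt (congrArg Fin.val h)))
    refine ⟨Equiv.ofBijective f hfb, ?_⟩
    intro x y hxy
    rw [adjIff] at hxy
    rw [adjIff]
    have hpx : ((Equiv.ofBijective f hfb) x).val = enat g m x.val := rfl
    have hpy : ((Equiv.ofBijective f hfb) y).val = enat g m y.val := rfl
    rw [hpx, hpy]
    rcases hxy with h | h
    · obtain ⟨d, hd1, hd2, hmod⟩ := enat_edge g m y.val x.val hm' h3 y.isLt x.isLt h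
      exact fun hc => cyc_step g (enat g m y.val) (enat g m x.val) d
        (enat_lt g m y.val hm' h3 y.isLt) (enat_lt g m x.val hm' h3 x.isLt)
        hd1 hd2 hmod (Or.symm hc)
    · obtain ⟨d, hd1, hd2, hmod⟩ := enat_edge g m x.val y.val hm' h3 x.isLt y.isLt h
      exact cyc_step g (enat g m x.val) (enat g m y.val) d
        (enat_lt g m x.val hm' h3 x.isLt) (enat_lt g m y.val hm' h3 y.isLt)
        hd1 hd2 hmod
  · -- odd case
    have hodd' : g % 2 = 1 := Nat.odd_iff.mp hodd
    set f : Fin g → Fin g := fun x => ⟨onat g x.val, onat_lt g x.val hg0⟩ with hf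
    have hfb : Function.Bijective f :=
      Finite.injective_iff_bijective.mp (fun x y h =>
        Fin.ext (onat_inj g hodd' x.isLt y.isLt (congrArg Fin.val h)))
    refine ⟨Equiv.ofBijective f hfb, ?_⟩
    intro x y hxy
    rw [adjIff] at hxy
    rw [adjIff]
    have hpx : ((Equiv.ofBijective f hfb) x).val = onat g x.val := rfl
    have hpy : ((Equiv.ofBijective f hfb) y).val = onat g y.val := rfl
    rw [hpx, hpy]
    rcases hxy with h | h
    · exact fun hc => cyc_step g (onat g y.val) (onat g x.val) 2
        (onat_lt g y.val hg0) (onat_lt g x.val hg0) (by omega) (by omega)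
        (onat_edge g y.val x.val h) (Or.symm hc)
    · exact cyc_step g (onat g x.val) (onat g y.val) 2
        (onat_lt g x.val hg0) (onat_lt g y.val hg0) (by omega) (by omega)
        (onat_edge g x.val y.val h)
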